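/- Let C(z) satisfy C(z) = 1 + 2z C(z) + z² C(z)². For positive integers n and integers t ≥ f ≥ 1 (with t > f), the coefficient of z^n in zC(z)·((zC(z))^{t−f} − (z/(1−z))^{t−f})/(1+zC(z))² equals Σ_{k ≥ t−f+1} (−1)^{k−t+f−1}·C(k−1, t−f−1)·(C(2n+k+f−t−3, n−k−1) − C(2n+k+f−t−3, n−k−2)). -/

import Mathlib

/-- Binomial coefficient `C(a,b)` for integers `a`, `b`, with the convention that it
vanishes when `b < 0` or `b > a`. -/
def zchoose (a b : ℤ) : ℤ :=
  if 0 ≤ b ∧ b ≤ a then (a.toNat).choose b.toNat else 0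

lemma zchoose_of_neg {a b : ℤ} (h : b < 0) : zchoose a b = 0 := by
  simp [zchoose]; omega

lemma zchoose_of_gt {a b : ℤ} (h : a < b) : zchoose a b = 0 := by
  simp [zchoose]; omega

lemma zchoose_eq {a b : ℤ} (h1 : 0 ≤ b) (h2 : b ≤ a) :
    zchoose a b = (a.toNat).choose b.toNat := by
  simp [zchoose, h1, h2]

lemma zchoose_zero {a : ℤ} (h : 0 ≤ a) : zchoose a 0 = 1 := by
  simp [zchoose, h]

lemma zchoose_pascal (a b : ℤ) (ha : 0 ≤ a) :
    zchoose (a + 1) b = zchoose a b + zchoose a (b - 1) := by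
  rcases lt_or_ge b 0 with hb | hb
  · rw [zchoose_of_neg hb, zchoose_of_neg hb, zchoose_of_neg (by omega)]; ring
  rcases eq_or_lt_of_le hb with hb0 | hb1
  · rw [← hb0, zchoose_zero (by omega), zchoose_zero ha, zchoose_of_neg (by omega)]; ring
  rcases lt_or_ge a b with hab | hab
  · rcases lt_trichotomy b (a + 1) with hba | hba | hba
    · omega
    · subst hba
      rw [zchoose_eq (by omega) (by omega), zchoose_of_gt hab,
        zchoose_eq (by omega) (by omega)]
      have h2 : (a+1-1).toNat = a.toNat := by omega
      rw [h2, Nat.choose_self, Nat.choose_self]; ring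
    · rw [zchoose_of_gt hba, zchoose_of_gt hab, zchoose_of_gt (by omega)]; ring
  · rw [zchoose_eq (by omega) (by omega), zchoose_eq (by omega) hab,
      zchoose_eq (by omega) (by omega)]
    have h1 : (a+1).toNat = a.toNat + 1 := by omega
    have h2 : b.toNat = (b-1).toNat + 1 := by omega
    rw [h1, h2, Nat.choose_succ_succ']
    push_cast; ring

lemma zchoose_symm {a b : ℤ} (h1 : 0 ≤ b) (h2 : b ≤ a) :
    zchoose a b = zchoose a (a - b) := by
  rw [zchoose_eq h1 h2, zchoose_eq (by omega) (by omega)]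
  have h3 : (a - b).toNat = a.toNat - b.toNat := by omega
  rw [h3, Nat.choose_symm (by omega)]

/-- `F j r = [z^j] Cat(z)^r` in closed form. -/
def Fc (j r : ℤ) : ℤ := zchoose (2*j + r - 1) j - zchoose (2*j + r - 1) (j - 1)

lemma Fc_base (j : ℤ) (hj : 0 ≤ j) : Fc (j+1) 1 = Fc j 2 := by
  unfold Fc
  have e1 := zchoose_pascal (2*j+1) (j+1) (by omega)
  have e2 := zchoose_pascal (2*j+1) j (by omega)
  have e3 : zchoose (2*j+1) (j+1) = zchoose (2*j+1) j := by
    have := zchoose_symm (a := 2*j+1) (b := j+1) (by omega) (by omega)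
    rw [this]; congr 1; ring
  have h1 : 2*(j+1)+1-1 = (2*j+1)+1 := by ring
  have h2 : 2*j+2-1 = 2*j+1 := by ring
  rw [h1, h2]
  have h3 : (j+1 : ℤ) - 1 = j := by ring
  rw [h3]
  rw [h3] at e1
  rw [e1, e2]
  linarith [e3]

lemma Fc_step (j r : ℤ) (hj : 0 ≤ j) (hr : 1 ≤ r) :
    Fc (j+1) (r+1) = Fc (j+1) r + Fc j (r+2) := by
  unfold Fc
  have e1 := zchoose_pascal (2*j+r+1) (j+1) (by omega)
  have e2 := zchoose_pascal (2*j+r+1) j (by omega)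
  have h1 : 2*(j+1)+(r+1)-1 = (2*j+r+1)+1 := by ring
  have h2 : 2*(j+1)+r-1 = 2*j+r+1 := by ring
  have h3 : 2*j+(r+2)-1 = 2*j+r+1 := by ring
  rw [h1, h2, h3]
  have h4 : (j+1 : ℤ) - 1 = j := by ring
  rw [h4, e1, e2]
  ring

open PowerSeries in
lemma coeff_catalan_pow (A : PowerSeries ℚ) (hA : A = 1 + X * A ^ 2) :
    ∀ j, ∀ r : ℕ, 1 ≤ r → PowerSeries.coeff (R := ℚ) j (A ^ r) = ((Fc j r : ℤ) : ℚ) := by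
  have hA0 : constantCoeff (R := ℚ) A = 1 := by
    conv_lhs => rw [hA]
    simp
  intro j
  induction j using Nat.strong_induction_on with
  | _ j IH =>
    match j with
    | 0 =>
      intro r hr
      rw [PowerSeries.coeff_zero_eq_constantCoeff_apply, map_pow, hA0, one_pow]
      unfold Fc
      simp only [Nat.cast_zero]
      rw [show (2*(0:ℤ)+(r:ℤ)-1 : ℤ) = (r:ℤ)-1 by ring, show ((0:ℤ)-1 : ℤ) = -1 by ring,
        zchoose_zero (by omega), zchoose_of_neg (by norm_num)]
      norm_num
    | j + 1 =>
      intro r hr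
      induction r, hr using Nat.le_induction with
      | base =>
        have h1 : A ^ 1 = 1 + X * A ^ 2 := by conv_lhs => rw [pow_one, hA]
        rw [h1, map_add, PowerSeries.coeff_one, if_neg (Nat.succ_ne_zero j),
          PowerSeries.coeff_succ_X_mul, IH j (by omega) 2 (by omega)]
        push_cast
        rw [Fc_base (j:ℤ) (by positivity)]
        ring
      | succ r hr IHr =>
        have h2 : A ^ (r+1) = A ^ r + X * A ^ (r+2) := by
          have : A ^ (r+1) = A ^ r * A := pow_succ A r
          rw [this]
          nth_rewrite 2 [hA]
          ring
        rw [h2, map_add, PowerSeries.coeff_succ_X_mul, IHr, IH j (by omega) (r+2) (by omega)]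
        have key : Fc ((j:ℤ)+1) ((r:ℤ)+1) = Fc ((j:ℤ)+1) r + Fc j ((r:ℤ)+2) :=
          Fc_step j r (by positivity) (by exact_mod_cast hr)
        push_cast
        rw [key]
        push_cast
        ring

open PowerSeries in
lemma coeff_X_pow_mul_catalan (A : PowerSeries ℚ) (hA : A = 1 + X * A ^ 2)
    (n s r : ℕ) (hr : 1 ≤ r) :
    PowerSeries.coeff (R := ℚ) n (X ^ (s+1) * A ^ r) =
      ((zchoose (2*(n:ℤ) - 2*s + r - 3) ((n:ℤ) - s - 1)
        - zchoose (2*(n:ℤ) - 2*s + r - 3) ((n:ℤ) - s - 2) : ℤ) : ℚ) := by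
  rw [PowerSeries.coeff_X_pow_mul']
  split_ifs with h
  · rw [coeff_catalan_pow A hA (n - (s+1)) r hr]
    unfold Fc
    have e1 : (2*((n - (s+1) : ℕ) : ℤ) + r - 1) = 2*(n:ℤ) - 2*s + r - 3 := by
      have : ((n - (s+1) : ℕ) : ℤ) = (n:ℤ) - s - 1 := by omega
      rw [this]; ring
    have e2 : ((n - (s+1) : ℕ) : ℤ) = (n:ℤ) - s - 1 := by omega
    rw [e1, e2, show ((n:ℤ) - s - 1 - 1) = (n:ℤ) - s - 2 by ring]
  · rw [zchoose_of_neg (by omega), zchoose_of_neg (by omega)]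
    norm_num

open PowerSeries

noncomputable def Sser (u : PowerSeries ℚ) (m N : ℕ) : PowerSeries ℚ :=
  ∑ j ∈ Finset.range (N+1),
    PowerSeries.C (R := ℚ) ((-1:ℚ)^j * ((m+j-1).choose j : ℚ)) * u^j

lemma Sser_succ (u : PowerSeries ℚ) (m N : ℕ) :
    Sser u m (N+1) = Sser u m N
      + PowerSeries.C (R := ℚ) ((-1:ℚ)^(N+1) * ((m+N).choose (N+1) : ℚ)) * u^(N+1) := by
  unfold Sser
  rw [Finset.sum_range_succ]
  have h : m + (N+1) - 1 = m + N := by omega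
  rw [h]

lemma Sser_zero_left (u : PowerSeries ℚ) (N : ℕ) : Sser u 0 N = 1 := by
  unfold Sser
  rw [Finset.sum_eq_single 0]
  · norm_num
  · intro j _ hj
    have h : 0 + j - 1 < j := by omega
    rw [Nat.choose_eq_zero_of_lt h]
    norm_num
  · intro h; exact absurd (Finset.mem_range.2 (by omega)) h

lemma Sser_mul (u : PowerSeries ℚ) (m N : ℕ) :
    (1 + u) * Sser u (m+1) N
      = Sser u m N + PowerSeries.C (R := ℚ) ((-1:ℚ)^N * ((m+N).choose N : ℚ)) * u^(N+1) := by
  induction N with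
  | zero =>
    unfold Sser
    norm_num
  | succ N IH =>
    rw [Sser_succ, Sser_succ]
    have p : ((m+N+1).choose (N+1) : ℚ) = ((m+N).choose N : ℚ) + ((m+N).choose (N+1) : ℚ) := by
      exact_mod_cast Nat.choose_succ_succ' (m+N) N
    have h3 : m + 1 + N = m + N + 1 := by omega
    rw [h3]
    have hp : (PowerSeries.C (R := ℚ)) (((m+N+1).choose (N+1) : ℚ))
        = (PowerSeries.C (R := ℚ)) ((m+N).choose N : ℚ) + (PowerSeries.C (R := ℚ)) ((m+N).choose (N+1) : ℚ) := by
      rw [← map_add]; exact congrArg _ p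
    simp only [map_mul, map_pow, map_neg, map_one] at *
    simp only [show m + (N+1) = m+N+1 from by omega] at *
    rw [hp]
    linear_combination IH

lemma Sser_inv (u : PowerSeries ℚ) (m N : ℕ) :
    ∃ E : PowerSeries ℚ, (1 + u)^m * Sser u m N = 1 + u^(N+1) * E := by
  induction m with
  | zero => exact ⟨0, by rw [Sser_zero_left]; ring⟩
  | succ m IH =>
    obtain ⟨E, hE⟩ := IH
    refine ⟨E + PowerSeries.C (R := ℚ) ((-1:ℚ)^N * ((m+N).choose N : ℚ)) * (1+u)^m, ?_⟩
    have h1 := Sser_mul u m N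
    calc (1+u)^(m+1) * Sser u (m+1) N = (1+u)^m * ((1+u) * Sser u (m+1) N) := by ring
    _ = _ := by rw [h1]; linear_combination hE

lemma zchoose_natCast (a b : ℕ) : zchoose (a : ℤ) (b : ℤ) = (a.choose b : ℤ) := by
  rcases le_or_gt b a with h | h
  · rw [zchoose_eq (by positivity) (by exact_mod_cast h)]
    simp
  · rw [zchoose_of_gt (by exact_mod_cast h), Nat.choose_eq_zero_of_lt h]
    simp

open PowerSeries in
/-- If `C(z)` satisfies `C = 1 + 2zC + z²C²`, then for a positive integer `n` and
integers `t > f ≥ 1`, the coefficient of `z^n` in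
`zC·((zC)^{t−f} − (z/(1−z))^{t−f})/(1+zC)²` equals
`Σ_{k ≥ t−f+1} (−1)^{k−t+f−1}·C(k−1,t−f−1)·(C(2n+k+f−t−3,n−k−1) − C(2n+k+f−t−3,n−k−2))`;
the terms with `k > n` vanish, so the sum may be taken over `t−f+1 ≤ k ≤ n`. -/
theorem coeff_motzkin_term6 (C : PowerSeries ℚ)
    (hC : C = 1 + 2 * X * C + X ^ 2 * C ^ 2) (n f t : ℕ) (hn : 1 ≤ n) (hf : 1 ≤ f)
    (htf : f < t) :
    PowerSeries.coeff (R := ℚ) n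
        (X * C * ((X * C) ^ (t - f) - (X * (1 - X)⁻¹) ^ (t - f)) * ((1 + X * C) ^ 2)⁻¹) =
      ∑ k ∈ Finset.Icc (t - f + 1) n,
        ((-1 : ℚ) ^ ((k : ℤ) - t + f - 1)
          * (zchoose ((k : ℤ) - 1) ((t : ℤ) - f - 1) : ℚ)
          * ((zchoose (2 * (n : ℤ) + k + f - t - 3) ((n : ℤ) - k - 1)
              - zchoose (2 * (n : ℤ) + k + f - t - 3) ((n : ℤ) - k - 2) : ℤ) : ℚ)) := by
  set m := t - f with hmdef
  have hm : 1 ≤ m := by omega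
  have htfz : (t : ℤ) - f = (m : ℤ) := by push_cast; omega
  -- Catalan setup
  have hCA : C = (1 + X * C)^2 := hC.trans (by ring)
  set A : PowerSeries ℚ := 1 + X * C with hAdef
  have hA : A = 1 + X * A ^ 2 := by
    rw [hAdef]
    conv_lhs => rw [hCA]
  have hA0 : constantCoeff (R := ℚ) A = 1 := by
    conv_lhs => rw [hA]
    simp
  have hA1 : A - 1 = X * A^2 := by linear_combination hA
  have hB : X * C = X * A^2 := by rw [hCA]
  have hA2 : constantCoeff (R := ℚ) (A^2) ≠ 0 := by rw [map_pow, hA0]; norm_num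
  have hinv : (A^2) * (A^2)⁻¹ = 1 := PowerSeries.mul_inv_cancel _ hA2
  clear_value A
  -- Step A : simplify the series
  have key1 : X * C * ((X * C) ^ m - (X * (1 - X)⁻¹) ^ m) * ((A ^ 2))⁻¹
      = X * (X * A^2) ^ m - X * (X * (1 - X)⁻¹) ^ m := by
    rw [hB]
    linear_combination (X * ((X * A^2)^m - (X * (1-X)⁻¹)^m)) * hinv
  -- Step B : the (1-X)⁻¹ part
  set u : PowerSeries ℚ := A^2 - A with hudef
  have hu : u = X * A^3 := by rw [hudef]; linear_combination A * hA1
  have hu1 : 1 + u = A^2 * (1 - X) := by rw [hudef]; linear_combination -hA1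
  have hu0 : constantCoeff (R := ℚ) (1 + u) = 1 := by
    rw [hu]; simp
  clear_value u
  have h1X : constantCoeff (R := ℚ) ((1 - X : PowerSeries ℚ)^m) ≠ 0 := by
    rw [map_pow]; simp
  have hinvpow : ((1 - X : PowerSeries ℚ)⁻¹) ^ m = (((1 - X : PowerSeries ℚ)^m))⁻¹ := by
    rw [PowerSeries.eq_inv_iff_mul_eq_one h1X, ← mul_pow,
      PowerSeries.inv_mul_cancel _ (by simp), one_pow]
  have hu1pow : constantCoeff (R := ℚ) ((1+u)^m) ≠ 0 := by rw [map_pow, hu0]; norm_num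
  have hApow : constantCoeff (R := ℚ) ((A^2)^m) ≠ 0 := by rw [map_pow, map_pow, hA0]; norm_num
  have key2 : X * (X * (1 - X)⁻¹) ^ m = X * (X * A^2) ^ m * ((1+u)^m)⁻¹ := by
    rw [hu1, mul_pow (A^2), PowerSeries.mul_inv_rev, mul_pow X (A^2), mul_pow X ((1-X)⁻¹), hinvpow]
    have hApm : (A^2)^m * ((A^2)^m)⁻¹ = 1 := PowerSeries.mul_inv_cancel _ hApow
    linear_combination (-(X * X^m * ((1-X)^m)⁻¹)) * hApm
  -- expansion of ((1+u)^m)⁻¹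
  obtain ⟨E, hE⟩ := Sser_inv u m n
  have hI : ((1+u)^m)⁻¹ = Sser u m n - u^(n+1) * E * ((1+u)^m)⁻¹ := by
    have h2 : Sser u m n * ((1+u)^m * ((1+u)^m)⁻¹) = (1 + u^(n+1) * E) * ((1+u)^m)⁻¹ := by
      rw [← hE]; ring
    rw [PowerSeries.mul_inv_cancel _ hu1pow, mul_one] at h2
    linear_combination -h2
  -- error term vanishes
  have herr : PowerSeries.coeff (R := ℚ) n (X * (X * A^2)^m * (u^(n+1) * E * ((1+u)^m)⁻¹)) = 0 := by
    have hform : X * (X * A^2)^m * (u^(n+1) * E * ((1+u)^m)⁻¹)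
        = X^(n+1) * (X * (X*A^2)^m * (A^3)^(n+1) * E * ((1+u)^m)⁻¹) := by
      rw [hu, mul_pow X (A^3)]
      ring
    rw [hform, PowerSeries.coeff_X_pow_mul', if_neg (by omega)]
  -- coefficient of the (1-X)⁻¹ part as a sum
  have key3 : PowerSeries.coeff (R := ℚ) n (X * (X * (1-X)⁻¹)^m)
      = ∑ j ∈ Finset.range (n+1), ((-1:ℚ)^j * ((m+j-1).choose j : ℚ))
          * PowerSeries.coeff (R := ℚ) n (X^(m+j+1) * A^(2*m+3*j)) := by
    rw [key2, hI, mul_sub, map_sub, herr, sub_zero]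
    simp only [Sser]
    rw [Finset.mul_sum, map_sum]
    apply Finset.sum_congr rfl
    intro j _
    have hterm : X * (X*A^2)^m * (PowerSeries.C (R := ℚ) ((-1:ℚ)^j * ((m+j-1).choose j : ℚ)) * u^j)
        = PowerSeries.C (R := ℚ) ((-1:ℚ)^j * ((m+j-1).choose j : ℚ)) * (X^(m+j+1) * A^(2*m+3*j)) := by
      rw [hu]; ring
    rw [hterm, PowerSeries.coeff_C_mul]
  -- canonical values
  set W : ℕ → ℚ := fun j =>
    ((zchoose (2*(n:ℤ)+j-3) ((n:ℤ)-m-j-1) - zchoose (2*(n:ℤ)+j-3) ((n:ℤ)-m-j-2) : ℤ) : ℚ)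
    with hWdef
  have hz : ∀ j : ℕ, PowerSeries.coeff (R := ℚ) n (X^(m+j+1) * A^(2*m+3*j)) = W j := by
    intro j
    rw [coeff_X_pow_mul_catalan A hA n (m+j) (2*m+3*j) (by omega)]
    have e1 : 2*(n:ℤ) - 2*((m+j:ℕ):ℤ) + ((2*m+3*j : ℕ):ℤ) - 3 = 2*(n:ℤ)+j-3 := by
      push_cast; ring
    have e2 : (n:ℤ) - ((m+j:ℕ):ℤ) - 1 = (n:ℤ)-(m:ℤ)-j-1 := by push_cast; ring
    have e3 : (n:ℤ) - ((m+j:ℕ):ℤ) - 2 = (n:ℤ)-(m:ℤ)-j-2 := by push_cast; ring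
    rw [e1, e2, e3, hWdef]
  have h1c : PowerSeries.coeff (R := ℚ) n (X * (X * A^2)^m) = W 0 := by
    have e : X * (X * A^2)^m = X^(m+0+1)*A^(2*m+3*0) := by norm_num; ring
    rw [e, hz 0]
  -- put everything together
  rw [key1, map_sub, key3, h1c]
  simp only [hz]
  rw [Finset.sum_range_succ']
  have hc0 : ((-1:ℚ)^0 * ((m+0-1).choose 0 : ℚ)) * W 0 = W 0 := by norm_num
  rw [hc0]
  rw [← Finset.Ico_add_one_right_eq_Icc, Finset.sum_Ico_eq_sum_range,
    show n + 1 - (m+1) = n - m from by omega]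
  have hvan : ∀ i ∈ Finset.range n, i ∉ Finset.range (n-m) →
      ((-1:ℚ)^(i+1) * ((m+(i+1)-1).choose (i+1) : ℚ)) * W (i+1) = 0 := by
    intro i hi hni
    have hge : n - m ≤ i := by
      simpa using hni
    have hW : W (i+1) = 0 := by
      rw [hWdef]
      simp only []
      rw [zchoose_of_neg (by omega), zchoose_of_neg (by omega)]
      norm_num
    rw [hW, mul_zero]
  rw [← Finset.sum_subset (Finset.range_subset_range.2 (by omega : n - m ≤ n)) hvan]
  have final : ∀ i ∈ Finset.range (n-m),
      ((-1 : ℚ) ^ (((m+1+i : ℕ) : ℤ) - t + f - 1)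
          * (zchoose (((m+1+i : ℕ) : ℤ) - 1) ((t : ℤ) - f - 1) : ℚ)
          * ((zchoose (2 * (n : ℤ) + ((m+1+i : ℕ) : ℤ) + f - t - 3) ((n : ℤ) - ((m+1+i : ℕ):ℤ) - 1)
              - zchoose (2 * (n : ℤ) + ((m+1+i : ℕ):ℤ) + f - t - 3) ((n : ℤ) - ((m+1+i:ℕ):ℤ) - 2) : ℤ) : ℚ))
      = -(((-1:ℚ)^(i+1) * ((m+(i+1)-1).choose (i+1) : ℚ)) * W (i+1)) := by
    intro i hi
    have hin : i < n - m := Finset.mem_range.1 hi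
    -- exponent
    have ez : ((m+1+i : ℕ) : ℤ) - t + f - 1 = ((i : ℕ) : ℤ) := by omega
    rw [ez, zpow_natCast]
    -- first binomial
    have eb1 : ((m+1+i : ℕ) : ℤ) - 1 = ((m+i : ℕ) : ℤ) := by omega
    have eb2 : (t : ℤ) - f - 1 = ((m-1 : ℕ) : ℤ) := by omega
    rw [eb1, eb2]
    have hsym : zchoose ((m+i : ℕ) : ℤ) ((m-1 : ℕ) : ℤ) = ((m+i).choose (i+1) : ℤ) := by
      rw [zchoose_symm (by positivity) (by exact_mod_cast by omega : ((m-1:ℕ):ℤ) ≤ ((m+i:ℕ):ℤ)),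
        show ((m+i : ℕ):ℤ) - ((m-1:ℕ):ℤ) = ((i+1 : ℕ):ℤ) from by omega, zchoose_natCast]
    rw [hsym]
    -- the W part
    have ew1 : 2 * (n : ℤ) + ((m+1+i : ℕ) : ℤ) + f - t - 3 = 2*(n:ℤ)+((i+1 : ℕ):ℤ)-3 := by omega
    have ew2 : (n : ℤ) - ((m+1+i : ℕ):ℤ) - 1 = (n:ℤ)-(m:ℤ)-((i+1:ℕ):ℤ)-1 := by push_cast; ring
    have ew3 : (n : ℤ) - ((m+1+i : ℕ):ℤ) - 2 = (n:ℤ)-(m:ℤ)-((i+1:ℕ):ℤ)-2 := by push_cast; ring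
    rw [ew1, ew2, ew3]
    have ec : m+(i+1)-1 = m+i := by omega
    rw [ec, hWdef]
    push_cast
    ring
  rw [Finset.sum_congr rfl final, Finset.sum_neg_distrib]
  ring
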